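/- Let n ≥ 1 be an integer and let H(a,b,c,d,n) = 16a²n⁴ + 64abn⁴ + 256b²n⁴ + 16c²n⁴ + 16d²n⁴ + 8adn³ − 64cdn³ + 8a²n² − 4abn² − 12acn² + 32b²n² + 24c²n² + 24d²n² + 6adn − 8an² − 16cdn + 8cn² + a² − ab − ac + b² + c² + d² − 8dn − 2a + 2c + 2. Then the quadruple (a₀, b₀, c₀, d₀) with a₀ = (8n²+1)(256n⁴+32n²+1)/(6144n⁸+4864n⁶+920n⁴+58n²+1), b₀ = −(512n⁶+32n⁴−12n²−1)/(2(6144n⁸+4864n⁶+920n⁴+58n²+1)), c₀ = −(49152n¹⁰+59392n⁸+17088n⁶+1952n⁴+88n²+1)/(2(98304n¹²+28672n¹⁰−18048n⁸−1568n⁶+472n⁴+50n²+1)), d₀ = −n(32768n⁸+19456n⁶+3328n⁴+196n²+3)/((16n⁴−8n²+1)(6144n⁸+4864n⁶+920n⁴+58n²+1)) satisfies ∂H/∂a = ∂H/∂b = ∂H/∂c = ∂H/∂d = 0 at (a₀, b₀, c₀, d₀), i.e., it solves the linear system: (32a+64b)n⁴ + 8dn³ + (16a−4b−12c−8)n² +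 6dn + 2a − b − c − 2 = 0; (64a+512b)n⁴ + (−4a+64b)n² − a + 2b = 0; 32cn⁴ − 64dn³ + (−12a+48c+8)n² − 16dn − a + 2c + 2 = 0; 32dn⁴ + (8a−64c)n³ + 48dn² + (6a−16c−8)n + 2d = 0. -/

import Mathlib

/-- The quadratic polynomial `H(a,b,c,d,n)` from the diagonal case. -/
def Hdiag (a b c d n : ℝ) : ℝ :=
  16 * a ^ 2 * n ^ 4 + 64 * a * b * n ^ 4 + 256 * b ^ 2 * n ^ 4 + 16 * c ^ 2 * n ^ 4 +
    16 * d ^ 2 * n ^ 4 + 8 * a * d * n ^ 3 - 64 * c * d * n ^ 3 + 8 * a ^ 2 * n ^ 2 -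
    4 * a * b * n ^ 2 - 12 * a * c * n ^ 2 + 32 * b ^ 2 * n ^ 2 + 24 * c ^ 2 * n ^ 2 +
    24 * d ^ 2 * n ^ 2 + 6 * a * d * n - 8 * a * n ^ 2 - 16 * c * d * n + 8 * c * n ^ 2 +
    a ^ 2 - a * b - a * c + b ^ 2 + c ^ 2 + d ^ 2 - 8 * d * n - 2 * a + 2 * c + 2

/-- The critical-point candidate `a₀`. -/
noncomputable def a₀ (n : ℝ) : ℝ :=
  (8 * n ^ 2 + 1) * (256 * n ^ 4 + 32 * n ^ 2 + 1) /
    (6144 * n ^ 8 + 4864 * n ^ 6 + 920 * n ^ 4 + 58 * n ^ 2 + 1)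

/-- The critical-point candidate `b₀`. -/
noncomputable def b₀ (n : ℝ) : ℝ :=
  -(512 * n ^ 6 + 32 * n ^ 4 - 12 * n ^ 2 - 1) /
    (2 * (6144 * n ^ 8 + 4864 * n ^ 6 + 920 * n ^ 4 + 58 * n ^ 2 + 1))

/-- The critical-point candidate `c₀`. -/
noncomputable def c₀ (n : ℝ) : ℝ :=
  -(49152 * n ^ 10 + 59392 * n ^ 8 + 17088 * n ^ 6 + 1952 * n ^ 4 + 88 * n ^ 2 + 1) /
    (2 * (98304 * n ^ 12 + 28672 * n ^ 10 - 18048 * n ^ 8 - 1568 * n ^ 6 +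
      472 * n ^ 4 + 50 * n ^ 2 + 1))

/-- The critical-point candidate `d₀`. -/
noncomputable def d₀ (n : ℝ) : ℝ :=
  -(n * (32768 * n ^ 8 + 19456 * n ^ 6 + 3328 * n ^ 4 + 196 * n ^ 2 + 3)) /
    ((16 * n ^ 4 - 8 * n ^ 2 + 1) *
      (6144 * n ^ 8 + 4864 * n ^ 6 + 920 * n ^ 4 + 58 * n ^ 2 + 1))

lemma deriv_quad (f : ℝ → ℝ) (A B C a : ℝ) (h : ∀ t, f t = A * t ^ 2 + B * t + C) :
    deriv f a = 2 * A * a + B := by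
  have hf : f = fun t => A * t ^ 2 + B * t + C := funext h
  rw [hf]
  have h1 : HasDerivAt (fun t : ℝ => A * t ^ 2 + B * t + C) (2 * A * a + B) a := by
    have := (((hasDerivAt_pow 2 a).const_mul A).add
      (((hasDerivAt_id a).const_mul B).add_const C))
    refine (this.congr_deriv (by push_cast; ring)).congr_of_eventuallyEq
      (Filter.Eventually.of_forall fun t => ?_)
    simp [id]; ring
  exact h1.deriv

set_option maxHeartbeats 2000000 in
/-- The quadruple `(a₀,b₀,c₀,d₀)` is a critical point of `H(·,·,·,·,n)`:
all four partial derivatives vanish, i.e. it solves the explicit linear system. -/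
theorem diag_critical_point (n : ℕ) (hn : 1 ≤ n) :
    let N : ℝ := (n : ℝ)
    let a := a₀ N; let b := b₀ N; let c := c₀ N; let d := d₀ N
    deriv (fun t => Hdiag t b c d N) a = 0 ∧
    deriv (fun t => Hdiag a t c d N) b = 0 ∧
    deriv (fun t => Hdiag a b t d N) c = 0 ∧
    deriv (fun t => Hdiag a b c t N) d = 0 ∧
    (32 * a + 64 * b) * N ^ 4 + 8 * d * N ^ 3 +
      (16 * a - 4 * b - 12 * c - 8) * N ^ 2 + 6 * d * N + 2 * a - b - c - 2 = 0 ∧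
    (64 * a + 512 * b) * N ^ 4 + (-4 * a + 64 * b) * N ^ 2 - a + 2 * b = 0 ∧
    32 * c * N ^ 4 - 64 * d * N ^ 3 + (-12 * a + 48 * c + 8) * N ^ 2 -
      16 * d * N - a + 2 * c + 2 = 0 ∧
    32 * d * N ^ 4 + (8 * a - 64 * c) * N ^ 3 + 48 * d * N ^ 2 +
      (6 * a - 16 * c - 8) * N + 2 * d = 0 := by
  intro N a b c d
  have hN : (1 : ℝ) ≤ N := Nat.one_le_cast.mpr hn
  have hN0 : (0 : ℝ) ≤ N := le_trans zero_le_one hN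
  have h1 : (6144 * N ^ 8 + 4864 * N ^ 6 + 920 * N ^ 4 + 58 * N ^ 2 + 1 : ℝ) ≠ 0 := by
    positivity
  have h2 : (16 * N ^ 4 - 8 * N ^ 2 + 1 : ℝ) ≠ 0 := by
    nlinarith [sq_nonneg (N ^ 2 - 1), sq_nonneg N, sq_nonneg (N^2)]
  have h3 : (98304 * N ^ 12 + 28672 * N ^ 10 - 18048 * N ^ 8 - 1568 * N ^ 6 +
      472 * N ^ 4 + 50 * N ^ 2 + 1 : ℝ) ≠ 0 := by
    have hfac : (98304 * N ^ 12 + 28672 * N ^ 10 - 18048 * N ^ 8 - 1568 * N ^ 6 +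
        472 * N ^ 4 + 50 * N ^ 2 + 1 : ℝ) =
        (16 * N ^ 4 - 8 * N ^ 2 + 1) *
          (6144 * N ^ 8 + 4864 * N ^ 6 + 920 * N ^ 4 + 58 * N ^ 2 + 1) := by ring
    rw [hfac]
    exact mul_ne_zero h2 h1
  have h2' : N ^ 2 * (N ^ 2 * 16 - 8) + 1 ≠ 0 := by convert h2 using 1; ring
  have h3' : N ^ 2 * (N ^ 2 * (N ^ 2 * (N ^ 2 * (N ^ 2 * (N ^ 2 * 98304 + 28672) - 18048) -
      1568) + 472) + 50) + 1 ≠ 0 := by convert h3 using 1; ring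
  have eq1 : (32 * a + 64 * b) * N ^ 4 + 8 * d * N ^ 3 +
      (16 * a - 4 * b - 12 * c - 8) * N ^ 2 + 6 * d * N + 2 * a - b - c - 2 = 0 := by
    show (32 * a₀ N + 64 * b₀ N) * N ^ 4 + 8 * d₀ N * N ^ 3 +
      (16 * a₀ N - 4 * b₀ N - 12 * c₀ N - 8) * N ^ 2 + 6 * d₀ N * N + 2 * a₀ N - b₀ N -
        c₀ N - 2 = 0
    simp only [a₀, b₀, c₀, d₀]
    field_simp
    ring
  have eq2 : (64 * a + 512 * b) * N ^ 4 + (-4 * a + 64 * b) * N ^ 2 - a + 2 * b = 0 := by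
    show (64 * a₀ N + 512 * b₀ N) * N ^ 4 + (-4 * a₀ N + 64 * b₀ N) * N ^ 2 - a₀ N +
      2 * b₀ N = 0
    simp only [a₀, b₀]
    field_simp
    ring
  have eq3 : 32 * c * N ^ 4 - 64 * d * N ^ 3 + (-12 * a + 48 * c + 8) * N ^ 2 -
      16 * d * N - a + 2 * c + 2 = 0 := by
    show 32 * c₀ N * N ^ 4 - 64 * d₀ N * N ^ 3 + (-12 * a₀ N + 48 * c₀ N + 8) * N ^ 2 -
      16 * d₀ N * N - a₀ N + 2 * c₀ N + 2 = 0
    simp only [a₀, c₀, d₀]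
    field_simp
    ring
  have eq4 : 32 * d * N ^ 4 + (8 * a - 64 * c) * N ^ 3 + 48 * d * N ^ 2 +
      (6 * a - 16 * c - 8) * N + 2 * d = 0 := by
    show 32 * d₀ N * N ^ 4 + (8 * a₀ N - 64 * c₀ N) * N ^ 3 + 48 * d₀ N * N ^ 2 +
      (6 * a₀ N - 16 * c₀ N - 8) * N + 2 * d₀ N = 0
    simp only [a₀, c₀, d₀]
    field_simp
    ring
  refine ⟨?_, ?_, ?_, ?_, eq1, eq2, eq3, eq4⟩
  · have hd := deriv_quad (fun t => Hdiag t b c d N) (16 * N ^ 4 + 8 * N ^ 2 + 1)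
      (64 * b * N ^ 4 + 8 * d * N ^ 3 - 4 * b * N ^ 2 - 12 * c * N ^ 2 + 6 * d * N -
        8 * N ^ 2 - b - c - 2) (Hdiag 0 b c d N) a
      (fun t => by simp only [Hdiag]; ring)
    rw [hd]; linear_combination eq1
  · have hd := deriv_quad (fun t => Hdiag a t c d N) (256 * N ^ 4 + 32 * N ^ 2 + 1)
      (64 * a * N ^ 4 - 4 * a * N ^ 2 - a) (Hdiag a 0 c d N) b
      (fun t => by simp only [Hdiag]; ring)
    rw [hd]; linear_combination eq2
  · have hd := deriv_quad (fun t => Hdiag a b t d N) (16 * N ^ 4 + 24 * N ^ 2 + 1)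
      (-64 * d * N ^ 3 - 12 * a * N ^ 2 + 8 * N ^ 2 - 16 * d * N - a + 2)
      (Hdiag a b 0 d N) c (fun t => by simp only [Hdiag]; ring)
    rw [hd]; linear_combination eq3
  · have hd := deriv_quad (fun t => Hdiag a b c t N) (16 * N ^ 4 + 24 * N ^ 2 + 1)
      (8 * a * N ^ 3 - 64 * c * N ^ 3 + 6 * a * N - 16 * c * N - 8 * N)
      (Hdiag a b c 0 N) d (fun t => by simp only [Hdiag]; ring)
    rw [hd]; linear_combination eq4
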